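/- (Coprimality step in the proof of Lemma 5.6.) If (G₂,G₃) is a Weierstrass pair of type (I4,4I2), then G₂ and G₃ are coprime in ℂ[X,Y] (every common divisor is a unit); moreover, for any homogeneous D ∈ ℂ[X,Y] with D² = −(G₂³ − G₃²), the polynomials G₃ − D and G₃ + D are coprime in ℂ[X,Y]. -/

import Mathlib

open MvPolynomial

noncomputable section

/-- A *Weierstrass pair of type (I4,4I2)*. -/
def IsWeierstrassI4FourI2 (G₂ G₃ : MvPolynomial (Fin 2) ℂ) : Prop :=
  G₂.IsHomogeneous 4 ∧ G₃.IsHomogeneous 6 ∧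
  ∃ (L : Fin 5 → MvPolynomial (Fin 2) ℂ) (u : ℂˣ),
    (∀ i, (L i).IsHomogeneous 1 ∧ L i ≠ 0) ∧
    (∀ i j, i ≠ j → ∀ t : ℂ, L i ≠ t • L j) ∧
    G₂ ^ 3 - G₃ ^ 2 =
      C (u : ℂ) * (L 0) ^ 4 * (L 1) ^ 2 * (L 2) ^ 2 * (L 3) ^ 2 * (L 4) ^ 2 ∧
    (∀ i, ¬ L i ∣ G₂ ∧ ¬ L i ∣ G₃)

variable {σ : Type*} {R : Type*}

lemma eq_C_of_td_zero [CommRing R] (p : MvPolynomial σ R) (h : p.totalDegree = 0) :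
    p = C (p.coeff 0) := by
  classical
  ext m
  rw [coeff_C]
  split_ifs with hm
  · rw [← hm]
  · by_cases hs : m ∈ p.support
    · exact absurd (Finsupp.ext fun x => (totalDegree_eq_zero_iff σ p).mp h m hs x) (Ne.symm hm)
    · exact notMem_support_iff.mp hs

lemma hc_top_ne_zero [CommRing R] (p : MvPolynomial σ R) (hp : p ≠ 0) :
    homogeneousComponent p.totalDegree p ≠ 0 := by
  classical
  obtain ⟨d, hd, he⟩ := Finset.exists_mem_eq_sup p.support
    (support_nonempty.mpr hp) (fun s => s.sum fun _ e => e)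
  have hdeg : d.degree = p.totalDegree := by
    rw [totalDegree, he, Finsupp.degree_apply, Finsupp.sum]
  intro h0
  have := coeff_homogeneousComponent (σ := σ) p.totalDegree p d
  rw [h0, if_pos hdeg] at this
  exact (mem_support_iff.mp hd) this.symm

lemma support_degree_lt [CommRing R] (p : MvPolynomial σ R) :
    ∀ d ∈ (p - homogeneousComponent p.totalDegree p).support, d.degree < p.totalDegree := by
  classical
  intro d hd
  rw [mem_support_iff, coeff_sub, coeff_homogeneousComponent] at hd
  rcases lt_trichotomy d.degree p.totalDegree with h | h | h
  · exact h
  · rw [if_pos h, sub_self] at hd; exact absurd rfl hd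
  · rw [if_neg h.ne', sub_zero] at hd
    have : p.totalDegree < ∑ i ∈ d.support, d i := by
      rwa [← Finsupp.degree_apply]
    exact absurd (coeff_eq_zero_of_totalDegree_lt this) hd

lemma td_remainder_lt [CommRing R] (p : MvPolynomial σ R)
    (hne : p - homogeneousComponent p.totalDegree p ≠ 0) :
    (p - homogeneousComponent p.totalDegree p).totalDegree < p.totalDegree := by
  classical
  set p' := p - homogeneousComponent p.totalDegree p with hp'
  obtain ⟨d, hd⟩ := support_nonempty.mpr hne
  have hpos : 0 < p.totalDegree := lt_of_le_of_lt (Nat.zero_le _) (support_degree_lt p d hd)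
  rw [totalDegree, Finset.sup_lt_iff (by simpa using hpos)]
  intro b hb
  have := support_degree_lt p b hb
  rw [Finsupp.degree] at this
  rwa [Finsupp.sum]

lemma td_mul_eq [CommRing R] [IsDomain R] (p q : MvPolynomial σ R) (hp : p ≠ 0) (hq : q ≠ 0) :
    (p * q).totalDegree = p.totalDegree + q.totalDegree := by
  classical
  refine le_antisymm (totalDegree_mul p q) ?_
  set a := p.totalDegree
  set b := q.totalDegree
  set P := homogeneousComponent a p with hP
  set Q := homogeneousComponent b q with hQ
  have hPhom : P.IsHomogeneous a := homogeneousComponent_isHomogeneous a p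
  have hQhom : Q.IsHomogeneous b := homogeneousComponent_isHomogeneous b q
  have key : homogeneousComponent (a + b) (p * q) = P * Q := by
    have hsplit : p * q = P * Q + ((p - P) * Q + (P * (q - Q) + (p - P) * (q - Q))) := by ring
    have hz : ∀ r s : MvPolynomial σ R, (r = p - P ∧ s = Q ∨ r = P ∧ s = q - Q ∨
        r = p - P ∧ s = q - Q) → homogeneousComponent (a + b) (r * s) = 0 := by
      rintro r s hrs
      by_cases hr0 : r * s = 0
      · rw [hr0, map_zero]
      · apply homogeneousComponent_eq_zero
        have hr : r ≠ 0 := fun h => hr0 (by rw [h, zero_mul])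
        have hs : s ≠ 0 := fun h => hr0 (by rw [h, mul_zero])
        have := totalDegree_mul r s
        rcases hrs with ⟨hr1, hs1⟩ | ⟨hr1, hs1⟩ | ⟨hr1, hs1⟩ <;> subst hr1 <;> subst hs1
        · exact lt_of_le_of_lt this
            (Nat.add_lt_add_of_lt_of_le (td_remainder_lt p hr) hQhom.totalDegree_le)
        · exact lt_of_le_of_lt this
            (Nat.add_lt_add_of_le_of_lt hPhom.totalDegree_le (td_remainder_lt q hs))
        · exact lt_of_le_of_lt this
            (Nat.add_lt_add (td_remainder_lt p hr) (td_remainder_lt q hs))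
    rw [hsplit, map_add, map_add, map_add,
      hz _ _ (Or.inl ⟨rfl, rfl⟩), hz _ _ (Or.inr (Or.inl ⟨rfl, rfl⟩)),
      hz _ _ (Or.inr (Or.inr ⟨rfl, rfl⟩)), add_zero, add_zero, add_zero,
      homogeneousComponent_of_mem ((mem_homogeneousSubmodule _ _).mpr (hPhom.mul hQhom)),
      if_pos rfl]
  have hPQ : P * Q ≠ 0 := mul_ne_zero (hc_top_ne_zero p hp) (hc_top_ne_zero q hq)
  by_contra hlt
  push_neg at hlt
  rw [homogeneousComponent_eq_zero _ _ hlt] at key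
  exact hPQ key.symm

lemma linear_dvd_of_dvd {L p : MvPolynomial (Fin 2) ℂ} (hL : L.IsHomogeneous 1) (hL0 : L ≠ 0)
    (hdvd : p ∣ L) (hpu : ¬ IsUnit p) : L ∣ p := by
  obtain ⟨q, hq⟩ := hdvd
  have hp0 : p ≠ 0 := fun h => hL0 (by rw [hq, h, zero_mul])
  have hq0 : q ≠ 0 := fun h => hL0 (by rw [hq, h, mul_zero])
  have htd : p.totalDegree + q.totalDegree = 1 := by
    rw [← td_mul_eq p q hp0 hq0, ← hq, hL.totalDegree hL0]
  have hpd : p.totalDegree ≠ 0 := by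
    intro h0
    apply hpu
    have := eq_C_of_td_zero p h0
    have hc : p.coeff 0 ≠ 0 := fun hc => hp0 (by rw [this, hc, map_zero])
    rw [this]
    exact (isUnit_iff_ne_zero.mpr hc).map C
  have hqd : q.totalDegree = 0 := by omega
  have hqC : q = C (q.coeff 0) := eq_C_of_td_zero q hqd
  have hqc : q.coeff 0 ≠ 0 := fun hc => hq0 (by rw [hqC, hc, map_zero])
  have hqu : IsUnit q := hqC ▸ (isUnit_iff_ne_zero.mpr hqc).map C
  obtain ⟨u, hu⟩ := hqu
  exact ⟨(↑u⁻¹ : _), by rw [hq, ← hu, mul_assoc, ← Units.val_mul, mul_inv_cancel, Units.val_one, mul_one]⟩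

theorem coprimality_step' (G₂ G₃ : MvPolynomial (Fin 2) ℂ)
    (h : IsWeierstrassI4FourI2 G₂ G₃) :
    (∀ d : MvPolynomial (Fin 2) ℂ, d ∣ G₂ → d ∣ G₃ → IsUnit d) := by
  obtain ⟨h2, h3, L, u, hL, hLnp, heq, hLnd⟩ := h
  intro d hd2 hd3
  by_contra hdu
  have hd0 : d ≠ 0 := by
    rintro rfl
    exact (hLnd 0).1 ((zero_dvd_iff.mp hd2) ▸ dvd_zero (L 0))
  obtain ⟨p, hpirr, hpd⟩ := WfDvdMonoid.exists_irreducible_factor hdu hd0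
  have hp : Prime p := hpirr.prime
  have hpdvd : p ∣ C (u : ℂ) * L 0 ^ 4 * L 1 ^ 2 * L 2 ^ 2 * L 3 ^ 2 * L 4 ^ 2 := by
    rw [← heq]
    exact hpd.trans (dvd_sub (hd2.trans (dvd_pow_self G₂ three_ne_zero))
      (hd3.trans (dvd_pow_self G₃ two_ne_zero)))
  have hLi : ∃ i, p ∣ L i := by
    rcases (hp.dvd_mul.mp hpdvd) with h' | h'
    · rcases hp.dvd_mul.mp h' with h' | h'
      · rcases hp.dvd_mul.mp h' with h' | h'
        · rcases hp.dvd_mul.mp h' with h' | h'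
          · rcases hp.dvd_mul.mp h' with h' | h'
            · exact absurd (isUnit_of_dvd_unit h' ((Units.isUnit u).map C)) hp.not_unit
            · exact ⟨0, hp.dvd_of_dvd_pow h'⟩
          · exact ⟨1, hp.dvd_of_dvd_pow h'⟩
        · exact ⟨2, hp.dvd_of_dvd_pow h'⟩
      · exact ⟨3, hp.dvd_of_dvd_pow h'⟩
    · exact ⟨4, hp.dvd_of_dvd_pow h'⟩
  obtain ⟨i, hi⟩ := hLi
  exact (hLnd i).1 ((linear_dvd_of_dvd (hL i).1 (hL i).2 hi hp.not_unit).trans (hpd.trans hd2))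

/-- If `(G₂,G₃)` is a Weierstrass pair of type (I4,4I2), then `G₂` and `G₃` are coprime
(every common divisor is a unit); moreover, for any homogeneous `D` with
`D² = −(G₂³ − G₃²)`, the polynomials `G₃ − D` and `G₃ + D` are coprime. -/
theorem coprimality_step (G₂ G₃ : MvPolynomial (Fin 2) ℂ)
    (h : IsWeierstrassI4FourI2 G₂ G₃) :
    (∀ d : MvPolynomial (Fin 2) ℂ, d ∣ G₂ → d ∣ G₃ → IsUnit d) ∧
    ∀ D : MvPolynomial (Fin 2) ℂ, (∃ n, D.IsHomogeneous n) →
      D ^ 2 = -(G₂ ^ 3 - G₃ ^ 2) →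
      ∀ d : MvPolynomial (Fin 2) ℂ, d ∣ G₃ - D → d ∣ G₃ + D → IsUnit d := by
  have part1 : ∀ d : MvPolynomial (Fin 2) ℂ, d ∣ G₂ → d ∣ G₃ → IsUnit d :=
    coprimality_step' G₂ G₃ h
  refine ⟨part1, ?_⟩
  obtain ⟨h2, h3, L, u, hL, hLnp, heq, hLnd⟩ := h
  intro D _ hD d h1 h2'
  by_contra hdu
  have h2u : IsUnit (2 : MvPolynomial (Fin 2) ℂ) := by
    have := (isUnit_iff_ne_zero.mpr (two_ne_zero (α := ℂ))).map (C : ℂ →+* MvPolynomial (Fin 2) ℂ)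
    rwa [map_ofNat] at this
  have hd0 : d ≠ 0 := by
    rintro rfl
    have e1 : G₃ - D = 0 := zero_dvd_iff.mp h1
    have e2 : G₃ + D = 0 := zero_dvd_iff.mp h2'
    have e3 : (2 : MvPolynomial (Fin 2) ℂ) * G₃ = 0 := by linear_combination e1 + e2
    have hG3 : G₃ = 0 := by
      rcases mul_eq_zero.mp e3 with h' | h'
      · exact absurd h' h2u.ne_zero
      · exact h'
    exact (hLnd 0).2 (hG3 ▸ dvd_zero (L 0))
  obtain ⟨p, hpirr, hpd⟩ := WfDvdMonoid.exists_irreducible_factor hdu hd0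
  have hp : Prime p := hpirr.prime
  have hpG3 : p ∣ G₃ := by
    have h2G3 : p ∣ 2 * G₃ := by
      have e : (G₃ - D) + (G₃ + D) = 2 * G₃ := by ring
      exact e ▸ dvd_add (hpd.trans h1) (hpd.trans h2')
    rcases hp.dvd_mul.mp h2G3 with h' | h'
    · exact absurd (isUnit_of_dvd_unit h' h2u) hp.not_unit
    · exact h'
  have hpG2 : p ∣ G₂ := by
    apply hp.dvd_of_dvd_pow (n := 3)
    have e : (G₃ - D) * (G₃ + D) = G₂ ^ 3 := by linear_combination -hD
    exact e ▸ Dvd.dvd.mul_right (hpd.trans h1) _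
  exact hp.not_unit (part1 p hpG2 hpG3)
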